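/- Assume K < 0 and l := 2(q+δ)/(2+δ) = 2_*(η), so that α_l = n-2-κ(η). Let v be a C² solution of u'' + ((n-1)/r)u' + (η/r²)u + K r^{δ} u|u|^{q-2} = 0 on an interval (r₀,∞), positive for all sufficiently large r, such that lim_{r→∞} v(r) r^{α_l} = 0 and lim_{r→∞} v'(r) r^{α_l+1} = 0. Then there exist constants 0 < C₁ ≤ C₂ and r₁ > max(r₀,1) such that C₁ ≤ v(r) r^{n-2-κ(η)} (ln r)^{1/(q-2)} ≤ C₂ for all r > r₁. -/

import Mathlib

open Real Filter Topology Set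

noncomputable section

/-- κ(η) = ((n-2) - √((n-2)²-4η))/2. -/
def kappa (n : ℕ) (η : ℝ) : ℝ :=
  (((n:ℝ) - 2) - Real.sqrt (((n:ℝ) - 2) ^ 2 - 4 * η)) / 2

/-- The Serrin-type exponent 2_*(η). -/
def serrinStar (n : ℕ) (η : ℝ) : ℝ :=
  2 * ((n:ℝ) + Real.sqrt (((n:ℝ) - 2) ^ 2 - 4 * η)) /
    ((n:ℝ) - 2 + Real.sqrt (((n:ℝ) - 2) ^ 2 - 4 * η))

private lemma monoHelper {f f' : ℝ → ℝ} {a : ℝ}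
    (hd : ∀ x ∈ Ici a, HasDerivAt f (f' x) x) (h0 : ∀ x ∈ Ioi a, 0 ≤ f' x) :
    MonotoneOn f (Ici a) := by
  refine monotoneOn_of_deriv_nonneg (convex_Ici a)
    (fun x hx => (hd x hx).continuousAt.continuousWithinAt) ?_ ?_
  · rw [interior_Ici]
    exact fun x hx => ((hd x (mem_Ici.2 (le_of_lt (mem_Ioi.1 hx)))).differentiableAt).differentiableWithinAt
  · rw [interior_Ici]
    intro x hx
    rw [(hd x (mem_Ici.2 (le_of_lt (mem_Ioi.1 hx)))).deriv]
    exact h0 x hx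

private lemma antiHelper {f f' : ℝ → ℝ} {a : ℝ}
    (hd : ∀ x ∈ Ici a, HasDerivAt f (f' x) x) (h0 : ∀ x ∈ Ioi a, f' x ≤ 0) :
    AntitoneOn f (Ici a) := by
  refine antitoneOn_of_deriv_nonpos (convex_Ici a)
    (fun x hx => (hd x hx).continuousAt.continuousWithinAt) ?_ ?_
  · rw [interior_Ici]
    exact fun x hx => ((hd x (mem_Ici.2 (le_of_lt (mem_Ioi.1 hx)))).differentiableAt).differentiableWithinAt
  · rw [interior_Ici]
    intro x hx
    rw [(hd x (mem_Ici.2 (le_of_lt (mem_Ioi.1 hx)))).deriv]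
    exact h0 x hx

set_option maxHeartbeats 2000000 in
theorem stmt19 (n : ℕ) (hn : 2 < n) (η K q δ l α : ℝ)
    (hη : η < ((n:ℝ) - 2) ^ 2 / 4) (hK : K < 0)
    (hq : 2 < q) (hδ : -2 < δ)
    (hl : l = 2 * (q + δ) / (2 + δ)) (hlcrit : l = serrinStar n η)
    (hα : α = 2 / (l - 2))
    (r₀ : ℝ) (hr₀ : 0 < r₀) (v : ℝ → ℝ)
    (hv : ContDiffOn ℝ 2 v (Ioi r₀))
    (heq : ∀ r ∈ Ioi r₀,
      deriv (deriv v) r + ((n:ℝ) - 1) / r * deriv v r + η / r ^ 2 * v r +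
        K * r ^ δ * v r * |v r| ^ (q - 2) = 0)
    (hpos : ∀ᶠ r in atTop, 0 < v r)
    (hlim : Tendsto (fun r => v r * r ^ α) atTop (𝓝 0))
    (hlim' : Tendsto (fun r => deriv v r * r ^ (α + 1)) atTop (𝓝 0)) :
    ∃ C₁ C₂ : ℝ, 0 < C₁ ∧ C₁ ≤ C₂ ∧
      ∃ r₁ : ℝ, max r₀ 1 < r₁ ∧
        ∀ r : ℝ, r₁ < r →
          C₁ ≤ v r * r ^ ((n:ℝ) - 2 - kappa n η) * (Real.log r) ^ (1 / (q - 2)) ∧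
          v r * r ^ ((n:ℝ) - 2 - kappa n η) * (Real.log r) ^ (1 / (q - 2)) ≤ C₂ := by
  -- ## Scalar facts
  have hn2 : (0:ℝ) < (n:ℝ) - 2 := by
    have : (2:ℝ) < (n:ℝ) := by exact_mod_cast hn
    linarith
  have hquad : 0 < ((n:ℝ) - 2) ^ 2 - 4 * η := by nlinarith
  set s : ℝ := Real.sqrt (((n:ℝ) - 2) ^ 2 - 4 * η) with hs_def
  have hs : 0 < s := Real.sqrt_pos.2 hquad
  have hs2 : s ^ 2 = ((n:ℝ) - 2) ^ 2 - 4 * η := Real.sq_sqrt hquad.le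
  have hns : 0 < (n:ℝ) - 2 + s := by linarith
  have hq2 : (0:ℝ) < q - 2 := by linarith
  have hq1 : (1:ℝ) < q - 1 := by linarith
  have hδ2 : (0:ℝ) < 2 + δ := by linarith
  have hl2 : l - 2 = 2 * (q - 2) / (2 + δ) := by rw [hl]; field_simp; ring
  have hl2pos : 0 < l - 2 := by rw [hl2]; positivity
  have hα1 : α = ((n:ℝ) - 2 + s) / 2 := by
    have h4 : l - 2 = 4 / ((n:ℝ) - 2 + s) := by
      rw [hlcrit]; unfold serrinStar; rw [← hs_def]; field_simp; ring
    rw [hα, h4]; field_simp; ring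
  have hαq : α * (q - 2) = 2 + δ := by
    have : α = (2 + δ) / (q - 2) := by rw [hα, hl2]; field_simp
    rw [this]; field_simp
  have key1 : 2 * α + 1 - s = (n:ℝ) - 1 := by rw [hα1]; ring
  have key2 : α * (α - s) = η := by rw [hα1]; nlinarith [hs2]
  have hkap : (n:ℝ) - 2 - kappa n η = α := by
    unfold kappa; rw [← hs_def, hα1]; ring
  have hB : 0 < -K := neg_pos.2 hK
  -- ## Setup
  obtain ⟨R₀, hR₀⟩ := eventually_atTop.1 hpos
  set R : ℝ := max (max r₀ 1) R₀ with hR_def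
  have hRr₀ : r₀ ≤ R := le_trans (le_max_left _ _) (le_max_left _ _)
  have hR1 : (1:ℝ) ≤ R := le_trans (le_max_right r₀ 1) (le_max_left _ _)
  have hRR₀ : R₀ ≤ R := le_max_right _ _
  set u : ℝ → ℝ := fun x => v x * x ^ α with hu_def
  set G : ℝ → ℝ := fun x => deriv v x * x ^ (α+1-s) + α * (v x * x ^ (α-s)) with hG_def
  have hx0 : ∀ {x : ℝ}, R < x → 0 < x := fun {x} hx => lt_of_lt_of_le one_pos (le_trans hR1 hx.le)
  have hvpos : ∀ {x : ℝ}, R < x → 0 < v x := fun {x} hx => hR₀ x (le_trans hRR₀ hx.le)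
  have hupos : ∀ {x : ℝ}, R < x → 0 < u x :=
    fun {x} hx => mul_pos (hvpos hx) (Real.rpow_pos_of_pos (hx0 hx) _)
  -- differentiability
  have hv2 : ContDiffOn ℝ (1+1) v (Ioi r₀) := by exact_mod_cast hv
  have hsplit := (contDiffOn_succ_iff_deriv_of_isOpen isOpen_Ioi).1 hv2
  have hdv : DifferentiableOn ℝ v (Ioi r₀) := hsplit.1
  have hddv : DifferentiableOn ℝ (deriv v) (Ioi r₀) := hsplit.2.2.differentiableOn one_ne_zero
  -- ## The key derivative identity
  have hG' : ∀ r, R < r → HasDerivAt G ((-K) * u r ^ (q-1) * r ^ (-1-s)) r := by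
    intro r hr
    have hr0 : 0 < r := hx0 hr
    have hrr₀ : r₀ < r := lt_of_le_of_lt hRr₀ hr
    have hvr : 0 < v r := hvpos hr
    have h1 : HasDerivAt v (deriv v r) r :=
      (hdv.differentiableAt (isOpen_Ioi.mem_nhds hrr₀)).hasDerivAt
    have h2 : HasDerivAt (deriv v) (deriv (deriv v) r) r :=
      (hddv.differentiableAt (isOpen_Ioi.mem_nhds hrr₀)).hasDerivAt
    have hp : ∀ p : ℝ, HasDerivAt (fun x : ℝ => x ^ p) (p * r ^ (p-1)) r :=
      fun p => Real.hasDerivAt_rpow_const (Or.inl hr0.ne')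
    have hd : HasDerivAt (fun x => deriv v x * x ^ (α+1-s) + α * (v x * x ^ (α-s)))
        (deriv (deriv v) r * r ^ (α+1-s) + deriv v r * ((α+1-s) * r ^ (α+1-s-1)) +
          α * (deriv v r * r ^ (α-s) + v r * ((α-s) * r ^ (α-s-1)))) r :=
      (h2.mul (hp _)).add ((h1.mul (hp _)).const_mul α)
    rw [hG_def, hu_def]
    convert hd using 1
    have heqr := heq r hrr₀
    have hdd : deriv (deriv v) r =
        -(((n:ℝ)-1)/r * deriv v r + η/r^2 * v r + K * r^δ * v r * (v r)^(q-2)) := by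
      rw [abs_of_pos hvr] at heqr; linarith
    have e1 : r ^ (α+1-s) = r ^ (α-1-s) * r * r := by
      rw [show α+1-s = α-1-s+1+1 by ring, Real.rpow_add hr0, Real.rpow_add hr0, Real.rpow_one]
    have e2 : r ^ (α+1-s-1) = r ^ (α-1-s) * r := by
      rw [show α+1-s-1 = α-1-s+1 by ring, Real.rpow_add hr0, Real.rpow_one]
    have e3 : r ^ (α-s) = r ^ (α-1-s) * r := by
      rw [show α-s = α-1-s+1 by ring, Real.rpow_add hr0, Real.rpow_one]
    have e4 : r ^ (α-s-1) = r ^ (α-1-s) := by rw [show α-s-1 = α-1-s by ring]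
    have eu : (v r * r ^ α) ^ (q-1) = (v r) ^ (q-1) * r ^ (α*(q-1)) := by
      rw [Real.mul_rpow hvr.le (Real.rpow_nonneg hr0.le _), ← Real.rpow_mul hr0.le]
    have ev : (v r) ^ (q-1) = (v r) ^ (q-2) * v r := by
      rw [show q-1 = q-2+1 by ring, Real.rpow_add hvr, Real.rpow_one]
    have key3 : r^δ * (r^(α-1-s) * r * r) = r^(-1-s) * r^(α*(q-1)) := by
      have c1 : r^(δ + (α-1-s) + 1 + 1) = r^δ * r^(α-1-s) * r^(1:ℝ) * r^(1:ℝ) := by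
        rw [Real.rpow_add hr0, Real.rpow_add hr0, Real.rpow_add hr0]
      have c2 : r^(-1-s + α*(q-1)) = r^(-1-s) * r^(α*(q-1)) := Real.rpow_add hr0 _ _
      have c3 : δ + (α-1-s) + 1 + 1 = -1-s + α*(q-1) := by linear_combination -hαq
      rw [Real.rpow_one] at c1
      rw [← c2, ← c3, c1]; ring
    have hdd2 : deriv (deriv v) r * (r^(α-1-s) * r * r) =
        -(((n:ℝ)-1) * (deriv v r * (r^(α-1-s) * r)) + η * (v r * r^(α-1-s)) +
          K * (r^δ * (r^(α-1-s) * r * r)) * (v r * (v r)^(q-2))) := by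
      rw [hdd]; field_simp
    rw [eu, ev, e1, e2, e3, e4, hdd2, key3]
    linear_combination (-(deriv v r * (r^(α-1-s) * r))) * key1 + (-(v r * r^(α-1-s))) * key2
  -- derivative of u
  have hu' : ∀ r, R < r → HasDerivAt u (r ^ (s-1) * G r) r := by
    intro r hr
    have hr0 : 0 < r := hx0 hr
    have hrr₀ : r₀ < r := lt_of_le_of_lt hRr₀ hr
    have h1 : HasDerivAt v (deriv v r) r :=
      (hdv.differentiableAt (isOpen_Ioi.mem_nhds hrr₀)).hasDerivAt
    have hp : HasDerivAt (fun x : ℝ => x ^ α) (α * r ^ (α-1)) r :=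
      Real.hasDerivAt_rpow_const (Or.inl hr0.ne')
    have hd : HasDerivAt (fun x => v x * x ^ α)
        (deriv v r * r ^ α + v r * (α * r ^ (α-1))) r := h1.mul hp
    rw [hu_def, hG_def]
    convert hd using 1
    have id1 : r^(s-1) * r^(α+1-s) = r^α := by
      rw [← Real.rpow_add hr0, show s-1+(α+1-s) = α from by ring]
    have id2 : r^(s-1) * r^(α-s) = r^(α-1) := by
      rw [← Real.rpow_add hr0, show s-1+(α-s) = α-1 from by ring]
    linear_combination (deriv v r) * id1 + (α * v r) * id2
  -- ## Limits
  have hGlim : Tendsto G atTop (𝓝 0) := by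
    have hW : Tendsto (fun x => deriv v x * x ^ (α+1) + α * (v x * x ^ α)) atTop (𝓝 0) := by
      have := hlim'.add (hlim.const_mul α)
      simpa using this
    have hmul := hW.mul (tendsto_rpow_neg_atTop hs)
    rw [zero_mul] at hmul
    refine hmul.congr' ?_
    filter_upwards [eventually_gt_atTop (0:ℝ)] with x hx
    have e1 : x^(α+1) * x^(-s) = x^(α+1-s) := by
      rw [← Real.rpow_add hx, show α+1+-s = α+1-s from by ring]
    have e2 : x^α * x^(-s) = x^(α-s) := by
      rw [← Real.rpow_add hx, show α+-s = α-s from by ring]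
    rw [hG_def]
    linear_combination (deriv v x) * e1 + (α * v x) * e2
  have hulim : Tendsto u atTop (𝓝 0) := hlim
  have hrpowlim : ∀ p : ℝ, 0 < p → Tendsto (fun x => u x ^ p) atTop (𝓝 0) := by
    intro p hp
    have hc : ContinuousAt (fun y : ℝ => y ^ p) 0 :=
      Real.continuousAt_rpow_const 0 p (Or.inr hp.le)
    have := hc.tendsto.comp hulim
    rwa [Real.zero_rpow hp.ne'] at this
  -- ## G ≤ 0
  have hGle : ∀ r, R < r → G r ≤ 0 := by
    intro r hr
    have hmono : MonotoneOn G (Ici r) := by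
      refine monoHelper (f' := fun x => (-K) * u x ^ (q-1) * x ^ (-1-s))
        (fun x hx => hG' x (lt_of_lt_of_le hr hx)) ?_
      intro x hx
      have hx' : R < x := lt_trans hr hx
      have := hupos hx'
      have := hx0 hx'
      positivity
    refine ge_of_tendsto hGlim ?_
    filter_upwards [eventually_ge_atTop r] with ρ hρ
    exact hmono self_mem_Ici hρ hρ
  -- ## u is antitone
  have hu_anti : ∀ x y, R < x → x ≤ y → u y ≤ u x := by
    intro x y hx hxy
    have hanti : AntitoneOn u (Ici x) := by
      refine antiHelper (f' := fun t => t ^ (s-1) * G t)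
        (fun t ht => hu' t (lt_of_lt_of_le hx ht)) ?_
      intro t ht
      have ht' : R < t := lt_trans hx ht
      exact mul_nonpos_of_nonneg_of_nonpos (Real.rpow_nonneg (hx0 ht').le _) (hGle t ht')
    exact hanti self_mem_Ici hxy hxy
  -- ## Upper bound for -G : 0 ≤ G r + (-K)/s * u r^(q-1) * r^(-s)
  have hPhi : ∀ r, R < r → 0 ≤ G r + (-K)/s * u r ^ (q-1) * r ^ (-s) := by
    intro r hr
    set c : ℝ := (-K)/s * u r ^ (q-1) with hc_def
    have hΦd : ∀ x ∈ Ici r, HasDerivAt (fun x => G x + c * x ^ (-s))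
        ((-K) * u x ^ (q-1) * x ^ (-1-s) + c * (-s * x ^ (-s-1))) x := by
      intro x hx
      have hx' : R < x := lt_of_lt_of_le hr hx
      exact (hG' x hx').add
        ((Real.hasDerivAt_rpow_const (Or.inl (hx0 hx').ne')).const_mul c)
    have hΦanti : AntitoneOn (fun x => G x + c * x ^ (-s)) (Ici r) := by
      refine antiHelper hΦd ?_
      intro x hx
      have hx' : R < x := lt_trans hr hx
      have hx0' : 0 < x := hx0 hx'
      have hE : (0:ℝ) < x ^ (-1-s) := Real.rpow_pos_of_pos hx0' _
      have h1 : u x ^ (q-1) ≤ u r ^ (q-1) :=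
        Real.rpow_le_rpow (hupos hx').le (hu_anti r x hr hx.le) (by linarith)
      have hcs : s * c = (-K) * u r ^ (q-1) := by
        rw [hc_def]; field_simp
      have e : x ^ (-s-1) = x ^ (-1-s) := by rw [show -s-1 = -1-s by ring]
      rw [e]
      have heq2 : (-K) * u x ^ (q-1) * x ^ (-1-s) + c * (-s * x ^ (-1-s)) =
          ((-K) * x ^ (-1-s)) * (u x ^ (q-1) - u r ^ (q-1)) := by
        linear_combination (-(x ^ (-1-s))) * hcs
      rw [heq2]
      exact mul_nonpos_of_nonneg_of_nonpos (by positivity) (by linarith)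
    have hΦlim : Tendsto (fun x => G x + c * x ^ (-s)) atTop (𝓝 0) := by
      have := hGlim.add ((tendsto_rpow_neg_atTop hs).const_mul c)
      simpa using this
    refine le_of_tendsto hΦlim ?_
    filter_upwards [eventually_ge_atTop r] with ρ hρ
    exact hΦanti self_mem_Ici hρ hρ
  -- ## choose R₂ where u^(q-2) is small
  have hbnd : (0:ℝ) < s^2 / ((-K) * (q-1)) := by positivity
  obtain ⟨R₂', hR₂'⟩ := eventually_atTop.1 ((hrpowlim (q-2) hq2).eventually (ge_mem_nhds hbnd))
  set R₂ : ℝ := max R₂' R + 1 with hR₂_def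
  have hR₂R : R < R₂ := lt_of_le_of_lt (le_max_right _ _) (lt_add_one _)
  have hsmall : ∀ x, R₂ ≤ x → u x ^ (q-2) ≤ s^2 / ((-K) * (q-1)) := by
    intro x hx
    exact hR₂' x (le_trans (le_trans (le_max_left _ _) (le_of_lt (lt_add_one _))) hx)
  -- ## Lower bound for -G : G r + (-K)/(2s) * u r^(q-1) * r^(-s) ≤ 0 for r > R₂
  have hPsi : ∀ r, R₂ ≤ r → G r + (-K)/(2*s) * u r ^ (q-1) * r ^ (-s) ≤ 0 := by
    intro r hr
    have hrR : R < r := lt_of_lt_of_le hR₂R hr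
    have hΨd : ∀ x ∈ Ici r, HasDerivAt (fun x => G x + (-K)/(2*s) * (u x ^ (q-1) * x ^ (-s)))
        ((-K) * u x ^ (q-1) * x ^ (-1-s) + (-K)/(2*s) *
          (((x ^ (s-1) * G x) * (q-1) * u x ^ (q-1-1)) * x ^ (-s) +
            u x ^ (q-1) * (-s * x ^ (-s-1)))) x := by
      intro x hx
      have hx' : R < x := lt_of_lt_of_le hrR hx
      have hA : HasDerivAt (fun y => u y ^ (q-1))
          ((x ^ (s-1) * G x) * (q-1) * u x ^ (q-1-1)) x :=
        (hu' x hx').rpow_const (Or.inl (hupos hx').ne')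
      have hB' : HasDerivAt (fun y : ℝ => y ^ (-s)) (-s * x ^ (-s-1)) x :=
        Real.hasDerivAt_rpow_const (Or.inl (hx0 hx').ne')
      exact (hG' x hx').add ((hA.mul hB').const_mul _)
    have hΨmono : MonotoneOn (fun x => G x + (-K)/(2*s) * (u x ^ (q-1) * x ^ (-s))) (Ici r) := by
      refine monoHelper hΨd ?_
      intro x hx
      have hx' : R < x := lt_trans hrR hx
      have hx0' : 0 < x := hx0 hx'
      have hu0 : 0 < u x := hupos hx'
      have hXE : 0 < u x ^ (q-1) * x ^ (-1-s) :=
        mul_pos (Real.rpow_pos_of_pos hu0 _) (Real.rpow_pos_of_pos hx0' _)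
      have heM : u x ^ (q-1-1) = u x ^ (q-2) := by rw [show q-1-1 = q-2 from by ring]
      have idC : x ^ (-s-1) = x ^ (-1-s) := by rw [show -s-1 = -1-s from by ring]
      have idB : x ^ (s-1) * x ^ (-s) * x ^ (-s) = x ^ (-1-s) := by
        rw [← Real.rpow_add hx0', ← Real.rpow_add hx0',
          show s-1+-s+-s = -1-s from by ring]
      -- lower bound for (x^(s-1) * G x) * x^(-s)
      have hGlb : -((-K)/s * u x ^ (q-1) * x ^ (-s)) ≤ G x := by linarith [hPhi x hx']
      have h5 := mul_le_mul_of_nonneg_left hGlb (Real.rpow_nonneg hx0'.le (s-1))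
      have h6 := mul_le_mul_of_nonneg_right h5 (Real.rpow_nonneg hx0'.le (-s))
      have hT : -((-K)/s * u x ^ (q-1) * x ^ (-1-s)) ≤ (x ^ (s-1) * G x) * x ^ (-s) := by
        calc -((-K)/s * u x ^ (q-1) * x ^ (-1-s))
            = x ^ (s-1) * -((-K)/s * u x ^ (q-1) * x ^ (-s)) * x ^ (-s) := by
              rw [← idB]; ring
        _ ≤ x ^ (s-1) * G x * x ^ (-s) := h6
      set C : ℝ := (-K)/(2*s) with hC_def
      have hCpos : 0 < C := by positivity
      have hCne : 0 < C * (q-1) * u x ^ (q-2) := by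
        have : (0:ℝ) < q - 1 := by linarith
        positivity
      have hT2 := mul_le_mul_of_nonneg_left hT hCne.le
      -- small factor
      have hsm : u x ^ (q-2) ≤ s^2 / ((-K)*(q-1)) := hsmall x (le_trans hr hx.le)
      have hF : (0:ℝ) ≤ ((-K)^2*(q-1)/(2*s^2)) * (u x ^ (q-1) * x ^ (-1-s)) := by
        have : (0:ℝ) < q - 1 := by linarith
        positivity
      have h7 := mul_le_mul_of_nonneg_right hsm hF
      have hKne : K ≠ 0 := ne_of_lt hK
      have hq1ne : q - 1 ≠ 0 := by positivity
      have hsne : s ≠ 0 := hs.ne'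
      have hsc : s^2/((-K)*(q-1)) * ((-K)^2*(q-1)/(2*s^2)) = (-K)/2 := by
        field_simp
      have hcalc : s^2/((-K)*(q-1)) * (((-K)^2*(q-1)/(2*s^2)) * (u x ^ (q-1) * x ^ (-1-s)))
          = (-K)/2 * (u x ^ (q-1) * x ^ (-1-s)) := by
        calc s^2/((-K)*(q-1)) * (((-K)^2*(q-1)/(2*s^2)) * (u x ^ (q-1) * x ^ (-1-s)))
            = (s^2/((-K)*(q-1)) * ((-K)^2*(q-1)/(2*s^2))) * (u x ^ (q-1) * x ^ (-1-s)) := by ring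
        _ = (-K)/2 * (u x ^ (q-1) * x ^ (-1-s)) := by rw [hsc]
      rw [hcalc] at h7
      -- assemble
      have hD : (-K) * u x ^ (q-1) * x ^ (-1-s) + C *
          (((x ^ (s-1) * G x) * (q-1) * u x ^ (q-1-1)) * x ^ (-s) +
            u x ^ (q-1) * (-s * x ^ (-s-1)))
          = (-K) * (u x ^ (q-1) * x ^ (-1-s))
            + C * (q-1) * u x ^ (q-2) * ((x ^ (s-1) * G x) * x ^ (-s))
            - (C * s) * (u x ^ (q-1) * x ^ (-1-s)) := by
        rw [heM, idC]; ring
      have hCs : C * s = (-K)/2 := by rw [hC_def]; field_simp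
      rw [hD, hCs]
      have hT3 : C * (q-1) * u x ^ (q-2) * -((-K)/s * u x ^ (q-1) * x ^ (-1-s))
          ≤ C * (q-1) * u x ^ (q-2) * ((x ^ (s-1) * G x) * x ^ (-s)) := hT2
      have hT4 : C * (q-1) * u x ^ (q-2) * ((-K)/s * u x ^ (q-1) * x ^ (-1-s))
          = u x ^ (q-2) * (((-K)^2*(q-1)/(2*s^2)) * (u x ^ (q-1) * x ^ (-1-s))) := by
        rw [hC_def]; field_simp
      linarith [hT3, h7, hT4]
    have hΨlim : Tendsto (fun x => G x + (-K)/(2*s) * (u x ^ (q-1) * x ^ (-s))) atTop (𝓝 0) := by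
      have h1 := (hrpowlim (q-1) (by linarith)).mul (tendsto_rpow_neg_atTop hs)
      have := hGlim.add (h1.const_mul ((-K)/(2*s)))
      simpa using this
    have h0 : G r + (-K)/(2*s) * (u r ^ (q-1) * r ^ (-s)) ≤ 0 := by
      refine ge_of_tendsto hΨlim ?_
      filter_upwards [eventually_ge_atTop r] with ρ hρ
      exact hΨmono self_mem_Ici hρ hρ
    linarith [h0, (by ring : (-K)/(2*s) * (u r ^ (q-1) * r ^ (-s)) = (-K)/(2*s) * u r ^ (q-1) * r ^ (-s))]
  -- ## the function φ = u^(-(q-2)) and its derivative bounds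
  set φf : ℝ → ℝ := fun x => u x ^ (-(q-2)) with hφ_def
  have hφd : ∀ x, R₂ ≤ x →
      HasDerivAt φf ((x ^ (s-1) * G x) * (-(q-2)) * u x ^ (-(q-2)-1)) x := by
    intro x hx
    have hx' : R < x := lt_of_lt_of_le hR₂R hx
    exact (hu' x hx').rpow_const (Or.inl (hupos hx').ne')
  set c₁ : ℝ := (q-2) * (-K) / (2*s) with hc₁_def
  set c₂ : ℝ := (q-2) * (-K) / s with hc₂_def
  have hc₁pos : 0 < c₁ := by rw [hc₁_def]; positivity
  have hc₂pos : 0 < c₂ := by rw [hc₂_def]; positivity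
  have h2c : c₂ = 2 * c₁ := by rw [hc₁_def, hc₂_def]; field_simp
  have hφbnd : ∀ x, R₂ ≤ x →
      c₁ * x⁻¹ ≤ (x ^ (s-1) * G x) * (-(q-2)) * u x ^ (-(q-2)-1) ∧
      (x ^ (s-1) * G x) * (-(q-2)) * u x ^ (-(q-2)-1) ≤ c₂ * x⁻¹ := by
    intro x hx
    have hx' : R < x := lt_of_lt_of_le hR₂R hx
    have hx0' : 0 < x := hx0 hx'
    have hu0 : 0 < u x := hupos hx'
    have hXX : u x ^ (-(q-2)-1) * u x ^ (q-1) = 1 := by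
      rw [← Real.rpow_add hu0, show -(q-2)-1+(q-1) = 0 from by ring, Real.rpow_zero]
    have hXpos : 0 < u x ^ (-(q-2)-1) := Real.rpow_pos_of_pos hu0 _
    have idr : x ^ (s-1) * x ^ (-s) = x⁻¹ := by
      rw [← Real.rpow_add hx0', show s-1+-s = -1 from by ring, Real.rpow_neg_one]
    have hup : -G x ≤ (-K)/s * u x ^ (q-1) * x ^ (-s) := by linarith [hPhi x hx']
    have hlo : (-K)/(2*s) * u x ^ (q-1) * x ^ (-s) ≤ -G x := by linarith [hPsi x hx]
    have eD : (x ^ (s-1) * G x) * (-(q-2)) * u x ^ (-(q-2)-1)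
        = ((q-2) * u x ^ (-(q-2)-1)) * (x ^ (s-1) * (-G x)) := by ring
    have hfac : (0:ℝ) ≤ (q-2) * u x ^ (-(q-2)-1) := by positivity
    have hxs : (0:ℝ) ≤ x ^ (s-1) := Real.rpow_nonneg hx0'.le _
    constructor
    · have h1 := mul_le_mul_of_nonneg_left hlo hxs
      have h2 := mul_le_mul_of_nonneg_left h1 hfac
      have e2 : ((q-2) * u x ^ (-(q-2)-1)) * (x ^ (s-1) * ((-K)/(2*s) * u x ^ (q-1) * x ^ (-s)))
          = c₁ * x⁻¹ := by
        calc ((q-2) * u x ^ (-(q-2)-1)) * (x ^ (s-1) * ((-K)/(2*s) * u x ^ (q-1) * x ^ (-s)))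
            = ((q-2) * (-K)/(2*s)) * (u x ^ (-(q-2)-1) * u x ^ (q-1)) *
                (x ^ (s-1) * x ^ (-s)) := by ring
        _ = ((q-2) * (-K)/(2*s)) * 1 * x⁻¹ := by rw [hXX, idr]
        _ = c₁ * x⁻¹ := by rw [hc₁_def]; ring
      rw [eD, ← e2]
      exact h2
    · have h1 := mul_le_mul_of_nonneg_left hup hxs
      have h2 := mul_le_mul_of_nonneg_left h1 hfac
      have e2 : ((q-2) * u x ^ (-(q-2)-1)) * (x ^ (s-1) * ((-K)/s * u x ^ (q-1) * x ^ (-s)))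
          = c₂ * x⁻¹ := by
        calc ((q-2) * u x ^ (-(q-2)-1)) * (x ^ (s-1) * ((-K)/s * u x ^ (q-1) * x ^ (-s)))
            = ((q-2) * (-K)/s) * (u x ^ (-(q-2)-1) * u x ^ (q-1)) *
                (x ^ (s-1) * x ^ (-s)) := by ring
        _ = ((q-2) * (-K)/s) * 1 * x⁻¹ := by rw [hXX, idr]
        _ = c₂ * x⁻¹ := by rw [hc₂_def]; ring
      rw [eD, ← e2]
      exact h2
  -- ## integrate: φf grows like log
  have hmono1 : MonotoneOn (fun x => φf x - c₁ * Real.log x) (Ici R₂) := by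
    refine monoHelper
      (f' := fun x => (x ^ (s-1) * G x) * (-(q-2)) * u x ^ (-(q-2)-1) - c₁ * x⁻¹)
      (fun x hx => ?_) (fun x hx => ?_)
    · exact (hφd x hx).sub
        ((Real.hasDerivAt_log (hx0 (lt_of_lt_of_le hR₂R hx)).ne').const_mul c₁)
    · have := (hφbnd x (le_of_lt hx)).1; linarith
  have hmono2 : MonotoneOn (fun x => c₂ * Real.log x - φf x) (Ici R₂) := by
    refine monoHelper
      (f' := fun x => c₂ * x⁻¹ - (x ^ (s-1) * G x) * (-(q-2)) * u x ^ (-(q-2)-1))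
      (fun x hx => ?_) (fun x hx => ?_)
    · exact ((Real.hasDerivAt_log (hx0 (lt_of_lt_of_le hR₂R hx)).ne').const_mul c₂).sub
        (hφd x hx)
    · have := (hφbnd x (le_of_lt hx)).2; linarith
  set D₁ : ℝ := φf R₂ - c₁ * Real.log R₂ with hD₁_def
  set D₂ : ℝ := φf R₂ - c₂ * Real.log R₂ with hD₂_def
  have hφlb : ∀ x, R₂ ≤ x → c₁ * Real.log x + D₁ ≤ φf x := by
    intro x hx
    have h := hmono1 self_mem_Ici hx hx
    simp only at h
    linarith [h, hD₁_def]
  have hφub : ∀ x, R₂ ≤ x → φf x ≤ c₂ * Real.log x + D₂ := by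
    intro x hx
    have h := hmono2 self_mem_Ici hx hx
    simp only at h
    linarith [h, hD₂_def]
  -- ## choice of constants and r₁
  set A₁ : ℝ := c₁ / 2 with hA₁_def
  set A₂ : ℝ := c₂ + |D₂| with hA₂_def
  have hA₁pos : 0 < A₁ := by rw [hA₁_def]; positivity
  have hA₂pos : 0 < A₂ := by
    rw [hA₂_def]; have := abs_nonneg D₂; linarith
  have hA₁₂ : A₁ ≤ A₂ := by
    rw [hA₁_def, hA₂_def]; have := abs_nonneg D₂; linarith [h2c, hc₁pos]
  have hβ : -(1/(q-2)) ≤ 0 := neg_nonpos.2 (by positivity)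
  set M : ℝ := max 1 (2 * |D₁| / c₁) with hM_def
  set r₁ : ℝ := max (max r₀ 1) (max R₂ (Real.exp M)) + 1 with hr₁_def
  refine ⟨A₂ ^ (-(1/(q-2))), A₁ ^ (-(1/(q-2))), Real.rpow_pos_of_pos hA₂pos _,
    Real.rpow_le_rpow_of_nonpos hA₁pos hA₁₂ hβ, r₁,
    lt_of_le_of_lt (le_max_left _ _) (lt_add_one _), ?_⟩
  intro r hrr
  have hXX1 : R₂ ≤ max (max r₀ 1) (max R₂ (Real.exp M)) :=
    le_trans (le_max_left _ _) (le_max_right _ _)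
  have hXX2 : Real.exp M ≤ max (max r₀ 1) (max R₂ (Real.exp M)) :=
    le_trans (le_max_right _ _) (le_max_right _ _)
  rw [hr₁_def] at hrr
  have hrR₂ : R₂ ≤ r := by linarith
  have hexp : Real.exp M ≤ r := by linarith
  have hr0' : (0:ℝ) < r := lt_of_lt_of_le (Real.exp_pos M) hexp
  have hlogM : M ≤ Real.log r := (Real.le_log_iff_exp_le hr0').2 hexp
  have hM1 : (1:ℝ) ≤ M := by rw [hM_def]; exact le_max_left _ _
  have hMD : 2 * |D₁| / c₁ ≤ M := by rw [hM_def]; exact le_max_right _ _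
  have hlog1 : (1:ℝ) ≤ Real.log r := le_trans hM1 hlogM
  have hlogD : 2 * |D₁| / c₁ ≤ Real.log r := le_trans hMD hlogM
  have hL0 : (0:ℝ) < Real.log r := lt_of_lt_of_le one_pos hlog1
  have habs1 : |D₁| ≤ (c₁/2) * Real.log r := by
    have h1 := mul_le_mul_of_nonneg_left hlogD (le_of_lt (half_pos hc₁pos))
    have he : (c₁/2) * (2*|D₁|/c₁) = |D₁| := by field_simp
    linarith [h1, he]
  have hφrlb : A₁ * Real.log r ≤ φf r := by
    have := hφlb r hrR₂
    have h2 := neg_abs_le D₁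
    rw [hA₁_def]
    linarith
  have habs2 : D₂ ≤ |D₂| * Real.log r :=
    le_trans (le_abs_self D₂) (le_mul_of_one_le_right (abs_nonneg _) hlog1)
  have hφrub : φf r ≤ A₂ * Real.log r := by
    have := hφub r hrR₂
    rw [hA₂_def]
    have hexpand : (c₂ + |D₂|) * Real.log r = c₂ * Real.log r + |D₂| * Real.log r := by ring
    linarith
  have hRr : R < r := lt_of_lt_of_le hR₂R hrR₂
  have hu0r : 0 < u r := hupos hRr
  have hfr : φf r = u r ^ (-(q-2)) := by rw [hφ_def]
  have hφpos : 0 < φf r := by rw [hfr]; exact Real.rpow_pos_of_pos hu0r _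
  have hA₁L : 0 < A₁ * Real.log r := mul_pos hA₁pos hL0
  have hue : u r = φf r ^ (-(1/(q-2))) := by
    rw [hfr, ← Real.rpow_mul hu0r.le,
      show (-(q-2)) * (-(1/(q-2))) = 1 from by
        rw [neg_mul_neg, mul_one_div, div_self hq2.ne'], Real.rpow_one]
  have b1 : (A₂ * Real.log r) ^ (-(1/(q-2))) ≤ φf r ^ (-(1/(q-2))) :=
    Real.rpow_le_rpow_of_nonpos hφpos hφrub hβ
  have b2 : φf r ^ (-(1/(q-2))) ≤ (A₁ * Real.log r) ^ (-(1/(q-2))) :=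
    Real.rpow_le_rpow_of_nonpos hA₁L hφrlb hβ
  have hsplit1 : ∀ A : ℝ, 0 < A →
      (A * Real.log r) ^ (-(1/(q-2))) * Real.log r ^ (1/(q-2)) = A ^ (-(1/(q-2))) := by
    intro A hA
    rw [Real.mul_rpow hA.le hL0.le, mul_assoc, ← Real.rpow_add hL0,
      show -(1/(q-2)) + 1/(q-2) = 0 from by ring, Real.rpow_zero, mul_one]
  have hLpow : (0:ℝ) ≤ Real.log r ^ (1/(q-2)) := Real.rpow_nonneg hL0.le _
  rw [hkap, show v r * r ^ α = u r from by rw [hu_def]]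
  constructor
  · calc A₂ ^ (-(1/(q-2)))
        = (A₂ * Real.log r) ^ (-(1/(q-2))) * Real.log r ^ (1/(q-2)) :=
          (hsplit1 A₂ hA₂pos).symm
    _ ≤ φf r ^ (-(1/(q-2))) * Real.log r ^ (1/(q-2)) :=
          mul_le_mul_of_nonneg_right b1 hLpow
    _ = u r * Real.log r ^ (1/(q-2)) := by rw [← hue]
  · calc u r * Real.log r ^ (1/(q-2))
        = φf r ^ (-(1/(q-2))) * Real.log r ^ (1/(q-2)) := by rw [← hue]
    _ ≤ (A₁ * Real.log r) ^ (-(1/(q-2))) * Real.log r ^ (1/(q-2)) :=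
          mul_le_mul_of_nonneg_right b2 hLpow
    _ = A₁ ^ (-(1/(q-2))) := hsplit1 A₁ hA₁pos

end
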